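/- Let n ≥ 2 and define φ_n : (0,1) × (−1,1)^{n−1} → ℝⁿ, φ_n(t, u₁,…,u_{n−1}) = (x₁,…,x_n), by x₁ = 2^{1−n} t ∏_{i=1}^{n−1}(1+u_i), x_k = t·((1−u_{k−1})/2)·∏_{i=k}^{n−1}((1+u_i)/2) for 2 ≤ k ≤ n−1, and x_n = t(1−u_{n−1})/2. Then φ_n is a bijection from (0,1) × (−1,1)^{n−1} onto the simplex D_n, and the absolute value of its Jacobian determinant at (t,u) equals t^{n−1} · 2^{−n(n−1)/2} · ∏_{i=1}^{n−1}(1+u_i)^{i−1}. -/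

import Mathlib

open MeasureTheory Finset

noncomputable section

def psum {n : ℕ} (x : Fin n → ℝ) (m : ℕ) : ℝ :=
  ∑ j : Fin n, if (j : ℕ) < m then x j else 0

def simplexD (n : ℕ) : Set (Fin n → ℝ) := {x | (∀ i, 0 < x i) ∧ psum x n < 1}

def phiN (n : ℕ) (hn : 2 ≤ n) (t : ℝ) (u : Fin (n - 1) → ℝ) : Fin n → ℝ := fun j =>
  if h0 : (j : ℕ) = 0 then t * (∏ i, (1 + u i)) / 2 ^ (n - 1)
  else if h1 : (j : ℕ) = n - 1 then t * (1 - u ⟨n - 2, by omega⟩) / 2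
  else t * ((1 - u ⟨(j : ℕ) - 1, by have := j.isLt; omega⟩) / 2) *
    ∏ i : Fin (n - 1), (if (j : ℕ) ≤ (i : ℕ) then (1 + u i) / 2 else 1)

/-- `P_m = ∏_{i ≥ m} (1+u_i)/2`. -/
def Pfun (n : ℕ) (u : Fin (n - 1) → ℝ) (m : ℕ) : ℝ :=
  ∏ i : Fin (n - 1), if m ≤ (i : ℕ) then (1 + u i) / 2 else 1

lemma Pfun_ge (n : ℕ) (u : Fin (n - 1) → ℝ) {m : ℕ} (hm : n - 1 ≤ m) : Pfun n u m = 1 := by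
  apply Finset.prod_eq_one
  intro i _
  rw [if_neg]
  omega

lemma Pfun_succ (n : ℕ) (u : Fin (n - 1) → ℝ) {m : ℕ} (hm : m < n - 1) :
    Pfun n u m = (1 + u ⟨m, hm⟩) / 2 * Pfun n u (m + 1) := by
  unfold Pfun
  rw [← Finset.mul_prod_erase (a := (⟨m, hm⟩ : Fin (n - 1))) _ _ (Finset.mem_univ _),
    if_pos (le_refl _)]
  congr 1
  rw [show (∏ i : Fin (n - 1), if m + 1 ≤ (i : ℕ) then (1 + u i) / 2 else 1)
      = ∏ i ∈ Finset.univ.erase (⟨m, hm⟩ : Fin (n - 1)),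
          (if m + 1 ≤ (i : ℕ) then (1 + u i) / 2 else 1) from
    (Finset.prod_erase _ (by simp)).symm]
  apply Finset.prod_congr rfl
  intro i hi
  have hne : i ≠ ⟨m, hm⟩ := (Finset.mem_erase.mp hi).1
  have : (i : ℕ) ≠ m := fun h => hne (Fin.ext h)
  by_cases h : m + 1 ≤ (i : ℕ)
  · rw [if_pos (by omega), if_pos h]
  · rw [if_neg (by omega), if_neg h]

lemma Pfun_pos (n : ℕ) {u : Fin (n - 1) → ℝ} (hu : ∀ i, -1 < u i) (m : ℕ) :
    0 < Pfun n u m := by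
  apply Finset.prod_pos
  intro i _
  by_cases h : m ≤ (i : ℕ)
  · rw [if_pos h]; have := hu i; linarith
  · rw [if_neg h]; norm_num

lemma phiN_zero (n : ℕ) (hn : 2 ≤ n) (t : ℝ) (u : Fin (n - 1) → ℝ) (j : Fin n)
    (hj : (j : ℕ) = 0) : phiN n hn t u j = t * Pfun n u 0 := by
  unfold phiN Pfun
  rw [dif_pos hj]
  have : ∀ i : Fin (n - 1), (if 0 ≤ (i : ℕ) then (1 + u i) / 2 else 1) = (1 + u i) / 2 := by
    intro i; rw [if_pos (Nat.zero_le _)]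
  rw [Finset.prod_congr rfl (fun i _ => this i), Finset.prod_div_distrib,
    Finset.prod_const, Finset.card_univ, Fintype.card_fin]
  ring

lemma phiN_succ (n : ℕ) (hn : 2 ≤ n) (t : ℝ) (u : Fin (n - 1) → ℝ) (j : Fin n)
    (hj : (j : ℕ) ≠ 0) :
    phiN n hn t u j
      = t * ((1 - u ⟨(j : ℕ) - 1, by have := j.isLt; omega⟩) / 2) * Pfun n u (j : ℕ) := by
  unfold phiN Pfun
  rw [dif_neg hj]
  by_cases h1 : (j : ℕ) = n - 1
  · rw [dif_pos h1]
    have hprod : (∏ i : Fin (n - 1), if (j : ℕ) ≤ (i : ℕ) then (1 + u i) / 2 else 1) = 1 := by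
      apply Finset.prod_eq_one
      intro i _
      rw [if_neg (by omega)]
    rw [hprod]
    have : (⟨n - 2, by omega⟩ : Fin (n - 1)) = ⟨(j : ℕ) - 1, by have := j.isLt; omega⟩ :=
      Fin.ext (by simp; omega)
    rw [this]; ring
  · rw [dif_neg h1]

lemma psum_zero {n : ℕ} (x : Fin n → ℝ) : psum x 0 = 0 := by
  unfold psum; simp

lemma psum_succ {n : ℕ} (x : Fin n → ℝ) {m : ℕ} (hm : m < n) :
    psum x (m + 1) = psum x m + x ⟨m, hm⟩ := by
  have key : ∀ j : Fin n, (if (j : ℕ) < m + 1 then x j else 0)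
      = (if (j : ℕ) < m then x j else 0) + (if j = ⟨m, hm⟩ then x j else 0) := by
    intro j
    by_cases h1 : (j : ℕ) < m
    · rw [if_pos (by omega), if_pos h1, if_neg (fun hc => by
        rw [hc] at h1; simp at h1), add_zero]
    · by_cases h2 : (j : ℕ) = m
      · rw [if_pos (by omega), if_neg h1, if_pos (Fin.ext h2), zero_add,
          (Fin.ext h2 : j = ⟨m, hm⟩)]
      · rw [if_neg (by omega), if_neg h1, if_neg (fun hc => h2 (by rw [hc])), add_zero]
  unfold psum
  rw [Finset.sum_congr rfl (fun j _ => key j), Finset.sum_add_distrib,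
    Finset.sum_ite_eq' Finset.univ (⟨m, hm⟩ : Fin n) x, if_pos (Finset.mem_univ _)]

lemma psum_of_ge {n : ℕ} (x : Fin n → ℝ) {m : ℕ} (hm : n ≤ m) : psum x m = psum x n := by
  unfold psum
  apply Finset.sum_congr rfl
  intro i _
  rw [if_pos (by omega), if_pos i.isLt]

lemma sum_phiN (n : ℕ) (hn : 2 ≤ n) (t : ℝ) (u : Fin (n - 1) → ℝ) :
    ∀ m, (hm : m < n) → psum (phiN n hn t u) (m + 1) = t * Pfun n u m := by
  intro m
  induction m with
  | zero =>
    intro hm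
    rw [psum_succ _ hm, psum_zero, zero_add, phiN_zero n hn t u _ rfl]
  | succ m ih =>
    intro hm
    rw [psum_succ _ hm, ih (by omega), phiN_succ n hn t u ⟨m + 1, hm⟩ (by simp)]
    have hm' : m < n - 1 := by omega
    rw [Pfun_succ n u hm']
    have : (⟨(((⟨m + 1, hm⟩ : Fin n) : ℕ)) - 1, by omega⟩ : Fin (n - 1)) = ⟨m, hm'⟩ :=
      Fin.ext (by simp)
    rw [this]
    have hc : ((⟨m + 1, hm⟩ : Fin n) : ℕ) = m + 1 := rfl
    rw [hc]
    ring

example : True := trivial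

lemma sum_phiN_total (n : ℕ) (hn : 2 ≤ n) (t : ℝ) (u : Fin (n - 1) → ℝ) :
    psum (phiN n hn t u) n = t := by
  have h := sum_phiN n hn t u (n - 1) (by omega)
  rw [show n - 1 + 1 = n by omega] at h
  rw [h, Pfun_ge n u (le_refl _), mul_one]

lemma psum_pos {n : ℕ} (hn : 0 < n) {x : Fin n → ℝ} (hx : ∀ i, 0 < x i) {m : ℕ}
    (hm : 1 ≤ m) : 0 < psum x m := by
  unfold psum
  apply Finset.sum_pos'
  · intro i _
    by_cases h : (i : ℕ) < m
    · rw [if_pos h]; exact le_of_lt (hx i)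
    · rw [if_neg h]
  · refine ⟨⟨0, hn⟩, Finset.mem_univ _, ?_⟩
    rw [if_pos (by show 0 < m; omega)]
    exact hx _

/-- inverse: t-component -/
def psiT {n : ℕ} (x : Fin n → ℝ) : ℝ := psum x n

/-- inverse: u-component -/
def psiU {n : ℕ} (hn : 2 ≤ n) (x : Fin n → ℝ) : Fin (n - 1) → ℝ := fun k =>
  1 - 2 * x ⟨(k : ℕ) + 1, by have := k.isLt; omega⟩ / psum x ((k : ℕ) + 2)

lemma phiN_mem (n : ℕ) (hn : 2 ≤ n) {t : ℝ} (ht : t ∈ Set.Ioo (0 : ℝ) 1)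
    {u : Fin (n - 1) → ℝ} (hu : ∀ i, u i ∈ Set.Ioo (-1 : ℝ) 1) :
    phiN n hn t u ∈ simplexD n := by
  have hu1 : ∀ i, -1 < u i := fun i => (hu i).1
  constructor
  · intro j
    by_cases hj : (j : ℕ) = 0
    · rw [phiN_zero n hn t u j hj]
      exact mul_pos ht.1 (Pfun_pos n hu1 0)
    · rw [phiN_succ n hn t u j hj]
      have := (hu ⟨(j : ℕ) - 1, by have := j.isLt; omega⟩).2
      apply mul_pos (mul_pos ht.1 (by linarith)) (Pfun_pos n hu1 _)
  · rw [sum_phiN_total n hn t u]; exact ht.2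

lemma psiT_phiN (n : ℕ) (hn : 2 ≤ n) (t : ℝ) (u : Fin (n - 1) → ℝ) :
    psiT (phiN n hn t u) = t := sum_phiN_total n hn t u

lemma psiU_phiN (n : ℕ) (hn : 2 ≤ n) {t : ℝ} (ht : 0 < t)
    {u : Fin (n - 1) → ℝ} (hu : ∀ i, -1 < u i) :
    psiU hn (phiN n hn t u) = u := by
  funext k
  unfold psiU
  have hk1 : ((k : ℕ) + 1) < n := by have := k.isLt; omega
  have hx : phiN n hn t u ⟨(k : ℕ) + 1, hk1⟩
      = t * ((1 - u k) / 2) * Pfun n u ((k : ℕ) + 1) := by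
    rw [phiN_succ n hn t u _ (by simp)]
    rfl
  have hs : psum (phiN n hn t u) ((k : ℕ) + 2) = t * Pfun n u ((k : ℕ) + 1) := by
    have := sum_phiN n hn t u ((k : ℕ) + 1) hk1
    rw [← this]
  have hpos : 0 < t * Pfun n u ((k : ℕ) + 1) := mul_pos ht (Pfun_pos n hu _)
  rw [hx, hs]
  have hP := (Pfun_pos n hu ((k : ℕ) + 1)).ne'
  field_simp
  ring

lemma psiT_mem {n : ℕ} (hn : 2 ≤ n) {x : Fin n → ℝ} (hx : x ∈ simplexD n) :
    psiT x ∈ Set.Ioo (0 : ℝ) 1 :=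
  ⟨psum_pos (by omega) hx.1 (by omega), hx.2⟩

lemma psiU_mem {n : ℕ} (hn : 2 ≤ n) {x : Fin n → ℝ} (hx : x ∈ simplexD n) :
    ∀ k, psiU hn x k ∈ Set.Ioo (-1 : ℝ) 1 := by
  intro k
  have hk1 : ((k : ℕ) + 1) < n := by have := k.isLt; omega
  have hs1 : 0 < psum x ((k : ℕ) + 1) := psum_pos (by omega) hx.1 (by omega)
  have hs2 : psum x ((k : ℕ) + 2) = psum x ((k : ℕ) + 1) + x ⟨(k : ℕ) + 1, hk1⟩ :=
    psum_succ x hk1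
  have hxpos := hx.1 ⟨(k : ℕ) + 1, hk1⟩
  have hs2pos : 0 < psum x ((k : ℕ) + 2) := by rw [hs2]; linarith
  unfold psiU
  have hlt2 : 2 * x ⟨(k : ℕ) + 1, hk1⟩ / psum x ((k : ℕ) + 2) < 2 := by
    rw [div_lt_iff₀ hs2pos]
    nlinarith
  have hgt0 : 0 < 2 * x ⟨(k : ℕ) + 1, hk1⟩ / psum x ((k : ℕ) + 2) :=
    div_pos (by linarith) hs2pos
  constructor
  · linarith
  · linarith

lemma phiN_psi {n : ℕ} (hn : 2 ≤ n) {x : Fin n → ℝ} (hx : x ∈ simplexD n) :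
    phiN n hn (psiT x) (psiU hn x) = x := by
  have hupos : ∀ i, -1 < psiU hn x i := fun i => (psiU_mem hn hx i).1
  -- downward induction: t * Pfun m = psum x (m+1)
  have key : ∀ d m, (hdm : m + d = n - 1) →
      psiT x * Pfun n (psiU hn x) m = psum x (m + 1) := by
    intro d
    induction d with
    | zero =>
      intro m hm
      have : m = n - 1 := by omega
      subst this
      rw [Pfun_ge n _ (le_refl _), mul_one, show n - 1 + 1 = n by omega]
      rfl
    | succ d ih =>
      intro m hm
      have hmlt : m < n - 1 := by omega
      have hm1 : m + 1 < n := by omega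
      rw [Pfun_succ n _ hmlt]
      have h1u : 1 + psiU hn x ⟨m, hmlt⟩
          = 2 * psum x (m + 1) / psum x (m + 2) := by
        unfold psiU
        have hs2 : psum x (m + 2) = psum x (m + 1) + x ⟨m + 1, hm1⟩ := psum_succ x hm1
        have hs2pos : 0 < psum x (m + 2) := psum_pos (by omega) hx.1 (by omega)
        have : (⟨(⟨m, hmlt⟩ : Fin (n - 1)) + 1, by omega⟩ : Fin n) = ⟨m + 1, hm1⟩ :=
          Fin.ext (by simp)
        rw [this]
        field_simp
        linarith [hs2]
      rw [h1u]
      have hs2pos : 0 < psum x (m + 2) := psum_pos (by omega) hx.1 (by omega)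
      calc psiT x * (2 * psum x (m + 1) / psum x (m + 2) / 2 * Pfun n (psiU hn x) (m + 1))
          = (psiT x * Pfun n (psiU hn x) (m + 1)) * (psum x (m + 1) / psum x (m + 2)) := by
            ring
        _ = psum x (m + 2) * (psum x (m + 1) / psum x (m + 2)) := by
            rw [ih (m + 1) (by omega)]
        _ = psum x (m + 1) := by
            rw [mul_comm, div_mul_cancel₀ _ (ne_of_gt hs2pos)]
  funext j
  by_cases hj : (j : ℕ) = 0
  · rw [phiN_zero n hn _ _ j hj]
    have := key (n - 1) 0 (by omega)
    rw [this]
    have : psum x 1 = x ⟨0, by omega⟩ := by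
      rw [show (1 : ℕ) = 0 + 1 from rfl, psum_succ x (by omega), psum_zero, zero_add]
    rw [this]
    congr 1
    exact Fin.ext (by simp; omega)
  · rw [phiN_succ n hn _ _ j hj]
    have hjlt := j.isLt
    have hj1 : (j : ℕ) - 1 < n - 1 := by omega
    have e1 : psiT x * Pfun n (psiU hn x) (j : ℕ) = psum x ((j : ℕ) + 1) :=
      key (n - 1 - (j : ℕ)) (j : ℕ) (by omega)
    have h1mu : (1 - psiU hn x ⟨(j : ℕ) - 1, hj1⟩) / 2
        = x j / psum x ((j : ℕ) + 1) := by
      unfold psiU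
      have : (⟨((⟨(j : ℕ) - 1, hj1⟩ : Fin (n - 1)) : ℕ) + 1, by simp; omega⟩ : Fin n) = j :=
        Fin.ext (by simp; omega)
      rw [this, show (((⟨(j : ℕ) - 1, hj1⟩ : Fin (n - 1)) : ℕ) + 2) = (j : ℕ) + 1 by
        simp; omega]
      ring
    have hspos : 0 < psum x ((j : ℕ) + 1) := psum_pos (by omega) hx.1 (by omega)
    calc psiT x * ((1 - psiU hn x ⟨(j : ℕ) - 1, hj1⟩) / 2) * Pfun n (psiU hn x) (j : ℕ)
        = (psiT x * Pfun n (psiU hn x) (j : ℕ)) * ((1 - psiU hn x ⟨(j : ℕ) - 1, hj1⟩) / 2) := by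
          ring
      _ = psum x ((j : ℕ) + 1) * (x j / psum x ((j : ℕ) + 1)) := by rw [e1, h1mu]
      _ = x j := by field_simp

example : True := trivial

def jacPhiN (n : ℕ) (hn : 2 ≤ n) (t : ℝ) (u : Fin (n - 1) → ℝ) :
    Matrix (Fin n) (Fin n) ℝ :=
  fun i j =>
    if h : (j : ℕ) = 0 then deriv (fun s => phiN n hn s u i) t
    else fderiv ℝ (fun w => phiN n hn t w i) u
      (Pi.single ⟨(j : ℕ) - 1, by have := j.isLt; omega⟩ 1)

lemma phiN_t_smul (n : ℕ) (hn : 2 ≤ n) (s : ℝ) (u : Fin (n - 1) → ℝ) (j : Fin n) :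
    phiN n hn s u j = s * phiN n hn 1 u j := by
  by_cases hj : (j : ℕ) = 0
  · rw [phiN_zero n hn s u j hj, phiN_zero n hn 1 u j hj]; ring
  · rw [phiN_succ n hn s u j hj, phiN_succ n hn 1 u j hj]; ring

lemma deriv_phiN (n : ℕ) (hn : 2 ≤ n) (t : ℝ) (u : Fin (n - 1) → ℝ) (j : Fin n) :
    deriv (fun s => phiN n hn s u j) t = phiN n hn 1 u j := by
  have h : (fun s => phiN n hn s u j) = fun s => s * phiN n hn 1 u j :=
    funext fun s => phiN_t_smul n hn s u j
  rw [h, deriv_mul_const differentiableAt_fun_id]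
  simp

def Gfun (n : ℕ) (i : ℕ) (l : Fin (n - 1)) : (Fin (n - 1) → ℝ) → ℝ :=
  fun w => if i ≤ (l : ℕ) then (1 + w l) / 2 else 1

def Gder (n : ℕ) (i : ℕ) (l : Fin (n - 1)) : (Fin (n - 1) → ℝ) →L[ℝ] ℝ :=
  if i ≤ (l : ℕ) then (2⁻¹ : ℝ) • (ContinuousLinearMap.proj l) else 0

lemma hasFDerivAt_G (n : ℕ) (i : ℕ) (l : Fin (n - 1)) (u : Fin (n - 1) → ℝ) :
    HasFDerivAt (Gfun n i l) (Gder n i l) u := by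
  unfold Gfun Gder
  by_cases h : i ≤ (l : ℕ)
  · simp only [if_pos h]
    have h1 : HasFDerivAt (fun w : Fin (n - 1) → ℝ => (1 + w l) * 2⁻¹)
        ((2⁻¹ : ℝ) • (ContinuousLinearMap.proj (R := ℝ) (φ := fun _ : Fin (n - 1) => ℝ) l)) u := by
      have h0 : HasFDerivAt (fun w : Fin (n - 1) → ℝ => 1 + w l)
          (ContinuousLinearMap.proj (R := ℝ) (φ := fun _ : Fin (n - 1) => ℝ) l) u :=
        (ContinuousLinearMap.proj (R := ℝ) (φ := fun _ : Fin (n - 1) => ℝ) l).hasFDerivAt.const_add 1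
      have := h0.mul_const (2⁻¹ : ℝ)
      convert this using 1
    have h2 : (fun w : Fin (n - 1) → ℝ => (1 + w l) / 2)
        = fun w => (1 + w l) * 2⁻¹ := funext fun w => div_eq_mul_inv _ _
    rw [h2]
    exact h1
  · simp only [if_neg h]
    exact hasFDerivAt_const 1 u

lemma hasFDerivAt_Pfun (n : ℕ) (u : Fin (n - 1) → ℝ) (i : ℕ) :
    HasFDerivAt (fun w => Pfun n w i)
      (∑ l, (∏ j ∈ Finset.univ.erase l, Gfun n i j u) • Gder n i l) u := by
  have := HasFDerivAt.finset_prod (u := Finset.univ)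
    (fun l (_ : l ∈ Finset.univ) => hasFDerivAt_G n i l u)
  exact this

lemma diff_Pfun (n : ℕ) (u : Fin (n - 1) → ℝ) (m : ℕ) :
    DifferentiableAt ℝ (fun w : Fin (n - 1) → ℝ => Pfun n w m) u :=
  (hasFDerivAt_Pfun n u m).differentiableAt

lemma phiN_diff (n : ℕ) (hn : 2 ≤ n) (t : ℝ) (u : Fin (n - 1) → ℝ) (j : Fin n) :
    DifferentiableAt ℝ (fun w : Fin (n - 1) → ℝ => phiN n hn t w j) u := by
  by_cases hj : (j : ℕ) = 0
  · have h : (fun w : Fin (n - 1) → ℝ => phiN n hn t w j)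
        = fun w => t * Pfun n w 0 := funext fun w => phiN_zero n hn t w j hj
    rw [h]
    exact (diff_Pfun n u 0).const_mul t
  · have h : (fun w : Fin (n - 1) → ℝ => phiN n hn t w j)
        = fun w => t * ((1 - w ⟨(j : ℕ) - 1, by have := j.isLt; omega⟩) / 2) * Pfun n w (j : ℕ) :=
      funext fun w => phiN_succ n hn t w j hj
    rw [h]
    apply DifferentiableAt.mul _ (diff_Pfun n u _)
    apply DifferentiableAt.const_mul
    have h2 : (fun y : Fin (n - 1) → ℝ => (1 - y ⟨(j : ℕ) - 1, by have := j.isLt; omega⟩) / 2)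
        = fun y => (1 - y ⟨(j : ℕ) - 1, by have := j.isLt; omega⟩) * 2⁻¹ :=
      funext fun y => div_eq_mul_inv _ _
    rw [h2]
    apply DifferentiableAt.mul_const
    apply DifferentiableAt.const_sub
    exact (ContinuousLinearMap.proj (R := ℝ) (φ := fun _ : Fin (n - 1) => ℝ) _).differentiableAt

lemma fderiv_tPfun (n : ℕ) (t : ℝ) (u : Fin (n - 1) → ℝ) (i : ℕ) (j : Fin (n - 1)) :
    fderiv ℝ (fun w => t * Pfun n w i) u (Pi.single j 1)
      = if i ≤ (j : ℕ) then
          t * (2⁻¹ * ∏ l ∈ Finset.univ.erase j, (if i ≤ (l : ℕ) then (1 + u l) / 2 else 1))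
        else 0 := by
  classical
  have hmain := (hasFDerivAt_Pfun n u i).const_mul t
  rw [hmain.fderiv]
  simp only [ContinuousLinearMap.smul_apply, ContinuousLinearMap.sum_apply]
  rw [Finset.smul_sum]
  have hterm : ∀ l : Fin (n - 1), l ≠ j →
      (Gder n i l) (Pi.single j 1) = 0 := by
    intro l hl
    unfold Gder
    by_cases h : i ≤ (l : ℕ)
    · simp only [if_pos h, ContinuousLinearMap.smul_apply, smul_eq_mul,
        ContinuousLinearMap.proj_apply]
      rw [Pi.single_eq_of_ne (by exact hl)]
      simp
    · simp only [if_neg h]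
      simp
  rw [Finset.sum_eq_single j (fun l _ hl => by
      rw [hterm l hl, smul_zero, smul_zero])
    (fun h => absurd (Finset.mem_univ j) h)]
  unfold Gder Gfun
  by_cases h : i ≤ (j : ℕ)
  · simp only [if_pos h, ContinuousLinearMap.smul_apply, smul_eq_mul,
      ContinuousLinearMap.proj_apply, Pi.single_eq_same]
    ring
  · simp only [if_neg h, ContinuousLinearMap.zero_apply]
    simp

example : True := trivial

def Smat (n : ℕ) : Matrix (Fin n) (Fin n) ℝ :=
  Matrix.of fun i k => if (k : ℕ) ≤ (i : ℕ) then 1 else 0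

lemma det_Smat (n : ℕ) : (Smat n).det = 1 := by
  rw [Matrix.det_of_lowerTriangular (Smat n) (by
    intro i j hij
    have : (i : ℕ) < (j : ℕ) := hij
    show (if (j : ℕ) ≤ (i : ℕ) then (1 : ℝ) else 0) = 0
    rw [if_neg (by omega)])]
  apply Finset.prod_eq_one
  intro i _
  show (if (i : ℕ) ≤ (i : ℕ) then (1 : ℝ) else 0) = 1
  rw [if_pos le_rfl]

lemma N_col0 (n : ℕ) (hn : 2 ≤ n) (t : ℝ) (u : Fin (n - 1) → ℝ) (i : Fin n) (j : Fin n)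
    (hj : (j : ℕ) = 0) :
    (Smat n * jacPhiN n hn t u) i j = Pfun n u (i : ℕ) := by
  rw [Matrix.mul_apply]
  have key : ∀ k : Fin n, Smat n i k * jacPhiN n hn t u k j
      = if (k : ℕ) < (i : ℕ) + 1 then phiN n hn 1 u k else 0 := by
    intro k
    show (if (k : ℕ) ≤ (i : ℕ) then (1 : ℝ) else 0) * jacPhiN n hn t u k j = _
    unfold jacPhiN
    rw [dif_pos hj, deriv_phiN]
    by_cases h : (k : ℕ) ≤ (i : ℕ)
    · rw [if_pos h, one_mul, if_pos (by omega)]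
    · rw [if_neg h, zero_mul, if_neg (by omega)]
  rw [Finset.sum_congr rfl (fun k _ => key k)]
  have h2 := sum_phiN n hn 1 u (i : ℕ) i.isLt
  unfold psum at h2
  rw [h2, one_mul]

lemma N_colsucc (n : ℕ) (hn : 2 ≤ n) (t : ℝ) (u : Fin (n - 1) → ℝ) (i : Fin n) (j : Fin n)
    (hj : (j : ℕ) ≠ 0) :
    (Smat n * jacPhiN n hn t u) i j
      = if (i : ℕ) ≤ (j : ℕ) - 1 then
          t * (2⁻¹ * ∏ l ∈ Finset.univ.erase (⟨(j : ℕ) - 1, by have := j.isLt; omega⟩ : Fin (n - 1)),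
            (if (i : ℕ) ≤ (l : ℕ) then (1 + u l) / 2 else 1))
        else 0 := by
  rw [Matrix.mul_apply]
  have key : ∀ k : Fin n, Smat n i k * jacPhiN n hn t u k j
      = if (k : ℕ) < (i : ℕ) + 1 then
          (fderiv ℝ (fun w => phiN n hn t w k) u)
            (Pi.single (⟨(j : ℕ) - 1, by have := j.isLt; omega⟩ : Fin (n - 1)) 1)
        else 0 := by
    intro k
    show (if (k : ℕ) ≤ (i : ℕ) then (1 : ℝ) else 0) * jacPhiN n hn t u k j = _
    unfold jacPhiN
    rw [dif_neg hj]
    by_cases h : (k : ℕ) ≤ (i : ℕ)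
    · rw [if_pos h, one_mul, if_pos (by omega)]
    · rw [if_neg h, zero_mul, if_neg (by omega)]
  rw [Finset.sum_congr rfl (fun k _ => key k), ← Finset.sum_filter,
    ← ContinuousLinearMap.sum_apply,
    ← fderiv_fun_sum (fun k _ => phiN_diff n hn t u k)]
  have hfun : (fun w => ∑ k ∈ Finset.filter (fun k : Fin n => (k : ℕ) < (i : ℕ) + 1)
      Finset.univ, phiN n hn t w k) = fun w => t * Pfun n w (i : ℕ) := by
    funext w
    rw [Finset.sum_filter]
    exact sum_phiN n hn t w (i : ℕ) i.isLt
  rw [hfun, fderiv_tPfun]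

lemma erase_prod (n : ℕ) (u : Fin (n - 1) → ℝ) (i : Fin (n - 1)) :
    (∏ l ∈ Finset.univ.erase i, (if (i : ℕ) ≤ (l : ℕ) then (1 + u l) / 2 else 1))
      = Pfun n u ((i : ℕ) + 1) := by
  unfold Pfun
  rw [show (∏ l : Fin (n - 1), if (i : ℕ) + 1 ≤ (l : ℕ) then (1 + u l) / 2 else 1)
      = ∏ l ∈ Finset.univ.erase i, (if (i : ℕ) + 1 ≤ (l : ℕ) then (1 + u l) / 2 else 1) from
    (Finset.prod_erase _ (by rw [if_neg (by omega)])).symm]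
  apply Finset.prod_congr rfl
  intro l hl
  have hne : l ≠ i := (Finset.mem_erase.mp hl).1
  have hv : (l : ℕ) ≠ (i : ℕ) := fun h => hne (Fin.ext h)
  by_cases h : (i : ℕ) + 1 ≤ (l : ℕ)
  · rw [if_pos (by omega), if_pos h]
  · rw [if_neg (by omega), if_neg h]

example : True := trivial

/-- `φ_n` is a bijection from `(0,1) × (-1,1)^{n-1}` onto the simplex `D_n`, with
`|Jac φ_n(t,u)| = t^{n-1}·2^{-n(n-1)/2}·∏ (1+uᵢ)^{i-1}`. -/
theorem stmt10 (n : ℕ) (hn : 2 ≤ n) :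
    Set.BijOn (fun q : ℝ × (Fin (n - 1) → ℝ) => phiN n hn q.1 q.2)
      (Set.Ioo 0 1 ×ˢ Set.pi Set.univ fun _ : Fin (n - 1) => Set.Ioo (-1 : ℝ) 1)
      (simplexD n) ∧
    ∀ t ∈ Set.Ioo (0 : ℝ) 1,
      ∀ u ∈ Set.pi Set.univ fun _ : Fin (n - 1) => Set.Ioo (-1 : ℝ) 1,
        |(jacPhiN n hn t u).det|
          = t ^ (n - 1) / 2 ^ (n * (n - 1) / 2) * ∏ i : Fin (n - 1), (1 + u i) ^ (i : ℕ) := by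
  constructor
  · refine ⟨fun q hq => phiN_mem n hn hq.1 (fun i => hq.2 i (Set.mem_univ i)), ?_, ?_⟩
    · intro q hq q' hq' heq
      simp only at heq
      have ht : q.1 = q'.1 := by
        rw [← psiT_phiN n hn q.1 q.2, ← psiT_phiN n hn q'.1 q'.2, heq]
      have hu : q.2 = q'.2 := by
        rw [← psiU_phiN n hn hq.1.1 (fun i => (hq.2 i (Set.mem_univ i)).1),
          ← psiU_phiN n hn hq'.1.1 (fun i => (hq'.2 i (Set.mem_univ i)).1), heq]
      exact Prod.ext ht hu
    · intro x hx
      exact ⟨(psiT x, psiU hn x), ⟨psiT_mem hn hx, fun k _ => psiU_mem hn hx k⟩,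
        phiN_psi hn hx⟩
  · obtain ⟨m, rfl⟩ : ∃ m, n = m + 2 := ⟨n - 2, by omega⟩
    intro t ht u hu
    have hu1 : ∀ i, -1 < u i := fun i => (hu i (Set.mem_univ i)).1
    show |(jacPhiN (m + 2) hn t u).det|
      = t ^ (m + 1) / 2 ^ ((m + 2) * (m + 1) / 2) * ∏ i : Fin (m + 1), (1 + u i) ^ (i : ℕ)
    set M := jacPhiN (m + 2) hn t u with hM
    set N := Smat (m + 2) * M with hN
    have hdetN : N.det = M.det := by rw [hN, Matrix.det_mul, det_Smat, one_mul]
    have hlast : ∀ j : Fin (m + 2), N (Fin.last (m + 1)) j = if j = 0 then 1 else 0 := by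
      intro j
      by_cases hj : j = 0
      · subst hj
        rw [if_pos rfl, hN, hM, N_col0 (m + 2) hn t u _ _ rfl]
        exact Pfun_ge (m + 2) u (by simp)
      · rw [if_neg hj, hN, hM,
          N_colsucc (m + 2) hn t u _ j (fun h => hj (Fin.ext h)),
          if_neg (by have := j.isLt; simp [Fin.last]; omega)]
    have hdet2 : N.det
        = (-1 : ℝ) ^ (m + 1)
          * (N.submatrix (Fin.last (m + 1)).succAbove ((0 : Fin (m + 2)).succAbove)).det := by
      rw [Matrix.det_succ_row N (Fin.last (m + 1)),
        Finset.sum_eq_single (0 : Fin (m + 2))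
          (fun j _ hj => by rw [hlast j, if_neg hj, mul_zero, zero_mul])
          (fun h => absurd (Finset.mem_univ _) h)]
      rw [hlast 0, if_pos rfl, mul_one]
      norm_num [Fin.val_last]
    set Minor := N.submatrix (Fin.last (m + 1)).succAbove ((0 : Fin (m + 2)).succAbove)
      with hMinor
    have hMentry : ∀ i j : Fin (m + 1), Minor i j = N (Fin.castSucc i) (Fin.succ j) := by
      intro i j
      rw [hMinor, Matrix.submatrix_apply, Fin.succAbove_last, Fin.succAbove_zero]
    have htri : Minor.BlockTriangular id := by
      intro i j hij
      have hij' : (j : ℕ) < (i : ℕ) := hij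
      rw [hMentry, hN, hM,
        N_colsucc (m + 2) hn t u _ _ (by simp [Fin.val_succ]),
        if_neg (by simp [Fin.val_succ, Fin.coe_castSucc]; omega)]
    have hdiag : ∀ i : Fin (m + 1),
        Minor i i = t * (2⁻¹ * Pfun (m + 2) u ((i : ℕ) + 1)) := by
      intro i
      rw [hMentry, hN, hM,
        N_colsucc (m + 2) hn t u _ _ (by simp [Fin.val_succ]),
        if_pos (by simp [Fin.val_succ, Fin.coe_castSucc])]
      congr 2
      rw [show (⟨((Fin.succ i : Fin (m + 2)) : ℕ) - 1, by
          have := (Fin.succ i).isLt; omega⟩ : Fin (m + 1)) = i from Fin.ext (by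
          simp [Fin.val_succ])]
      simp only [Fin.coe_castSucc]
      exact erase_prod (m + 2) u i
    have hdetMinor : Minor.det = ∏ i : Fin (m + 1), (t * (2⁻¹ * Pfun (m + 2) u ((i : ℕ) + 1))) := by
      rw [Matrix.det_of_upperTriangular htri]
      exact Finset.prod_congr rfl fun i _ => hdiag i
    have hprodpos : 0 < ∏ i : Fin (m + 1), (t * (2⁻¹ * Pfun (m + 2) u ((i : ℕ) + 1))) :=
      Finset.prod_pos fun i _ =>
        mul_pos ht.1 (mul_pos (by norm_num) (Pfun_pos (m + 2) hu1 _))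
    have habs : |M.det| = ∏ i : Fin (m + 1), (t * (2⁻¹ * Pfun (m + 2) u ((i : ℕ) + 1))) := by
      rw [← hdetN, hdet2, abs_mul, abs_pow, abs_neg, abs_one, one_pow, one_mul,
        hdetMinor, abs_of_pos hprodpos]
    rw [habs]
    have e1 : ∀ i : Fin (m + 1), t * (2⁻¹ * Pfun (m + 2) u ((i : ℕ) + 1))
        = (t * 2⁻¹) * Pfun (m + 2) u ((i : ℕ) + 1) := fun i => by ring
    rw [Finset.prod_congr rfl (fun i _ => e1 i), Finset.prod_mul_distrib,
      Finset.prod_const, Finset.card_univ, Fintype.card_fin]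
    have e2 : ∏ i : Fin (m + 1), Pfun (m + 2) u ((i : ℕ) + 1)
        = ∏ l : Fin (m + 1), ((1 + u l) / 2) ^ (l : ℕ) := by
      unfold Pfun
      rw [Finset.prod_comm]
      apply Finset.prod_congr rfl
      intro l _
      have e3 : ∀ x : Fin (m + 1), (if (x : ℕ) + 1 ≤ (l : ℕ) then (1 + u l) / 2 else 1)
          = (if x < l then (1 + u l) / 2 else 1) := by
        intro x
        by_cases h : (x : ℕ) + 1 ≤ (l : ℕ)
        · rw [if_pos h, if_pos (by rw [Fin.lt_def]; omega)]
        · rw [if_neg h, if_neg (by rw [Fin.lt_def]; omega)]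
      rw [Finset.prod_congr rfl (fun x _ => e3 x), Finset.prod_ite, Finset.prod_const,
        Finset.prod_const, one_pow, mul_one]
      congr 1
      rw [show Finset.filter (fun x : Fin (m + 1) => x < l) Finset.univ = Finset.Iio l from by
        ext x; simp]
      exact Fin.card_Iio l
    rw [e2]
    have e4 : ∀ l : Fin (m + 1), ((1 + u l) / 2) ^ (l : ℕ)
        = (1 + u l) ^ (l : ℕ) * (2⁻¹ : ℝ) ^ (l : ℕ) := fun l => by
      rw [div_eq_mul_inv, mul_pow]
    rw [Finset.prod_congr rfl (fun l _ => e4 l), Finset.prod_mul_distrib,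
      Finset.prod_pow_eq_pow_sum]
    have hexp : (m + 1) + ∑ l : Fin (m + 1), (l : ℕ) = (m + 2) * (m + 1) / 2 := by
      show (m + 1) + ∑ l : Fin (m + 1), (l : ℕ) = (m + 2) * ((m + 2) - 1) / 2
      rw [← Finset.sum_range_id (m + 2), Finset.sum_range_succ,
        Fin.sum_univ_eq_sum_range (fun l => l) (m + 1)]
      exact Nat.add_comm _ _
    rw [← hexp, pow_add]
    field_simp
    have h1 : ((1 : ℝ) / 2) ^ m * 2 ^ m = 1 := by rw [← mul_pow]; norm_num
    have h2 : ((1 : ℝ) / 2) ^ (∑ i : Fin (m + 1), (i : ℕ)) * 2 ^ (∑ i : Fin (m + 1), (i : ℕ)) = 1 := by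
      rw [← mul_pow]; norm_num
    linear_combination (2 * (t * t ^ m * ∏ x : Fin (m + 1), (1 + u x) ^ (x : ℕ)) * ((1 : ℝ) / 2) ^ (∑ i : Fin (m + 1), (i : ℕ)) * 2 ^ (∑ i : Fin (m + 1), (i : ℕ))) * h1 + (2 * (t * t ^ m * ∏ x : Fin (m + 1), (1 + u x) ^ (x : ℕ))) * h2

example : True := trivial
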